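/- For every natural number n and real p with 0 < p ≤ 1, the total variation-type sum ∑_{m=0}^∞ |(np)^m/m! · e^{-np} − C(n,m) p^m (1−p)^{n−m}| is at most 2p (with the convention C(n,m)=0 for m>n). -/

import Mathlib

open Finset
namespace Vervaat
noncomputable def pois (lam : ℝ) (m : ℕ) : ℝ := lam ^ m / m.factorial * Real.exp (-lam)
lemma pois_nonneg {lam : ℝ} (h : 0 ≤ lam) (m : ℕ) : 0 ≤ pois lam m := by unfold pois; positivity
lemma summable_pois (lam : ℝ) : Summable (pois lam) :=
  (Real.summable_pow_div_factorial lam).mul_right _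
lemma exp_eq_tsum (lam : ℝ) : Real.exp lam = ∑' m : ℕ, lam ^ m / m.factorial := by
  rw [Real.exp_eq_exp_ℝ, NormedSpace.exp_eq_tsum_div]
lemma tsum_pois (lam : ℝ) : ∑' m, pois lam m = 1 := by
  unfold pois
  rw [tsum_mul_right, ← exp_eq_tsum, ← Real.exp_add, add_neg_cancel, Real.exp_zero]
lemma summable_tail (lam : ℝ) (j : ℕ) :
    Summable (fun s : ℕ => lam ^ (j + s) / (j + s).factorial) := by
  have := ((Real.summable_pow_div_factorial lam).comp_injective (add_right_injective j))
  exact this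
lemma summable_tail_pois (lam : ℝ) (j : ℕ) :
    Summable (fun s : ℕ => pois lam (j + s)) :=
  (summable_tail lam j).mul_right _
lemma tail_pois (lam : ℝ) (j : ℕ) :
    ∑' s : ℕ, pois lam (j + s) = 1 - ∑ u ∈ range j, pois lam u := by
  have h := Summable.sum_add_tsum_nat_add (f := pois lam) j (summable_pois lam)
  have h2 : ∀ s : ℕ, pois lam (s + j) = pois lam (j + s) := fun s => by rw [add_comm]
  rw [tsum_congr h2] at h
  linarith [tsum_pois lam, h]

noncomputable def steinC (lam : ℝ) (h : ℕ → ℝ) : ℝ := ∑' k, pois lam k * h k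

noncomputable def g (lam : ℝ) (h : ℕ → ℝ) (j : ℕ) : ℝ :=
  (j-1).factorial / lam ^ j * Real.exp lam *
    ∑ k ∈ range j, pois lam k * (h k - steinC lam h)

lemma stein_eq (lam : ℝ) (hl : 0 < lam) (h : ℕ → ℝ) (j : ℕ) :
    lam * g lam h (j+1) - j * g lam h j = h j - steinC lam h := by
  have hlne : lam ≠ 0 := ne_of_gt hl
  have hene : Real.exp lam ≠ 0 := Real.exp_ne_zero lam
  unfold g
  rw [sum_range_succ]
  cases j with
  | zero =>
      simp only [Nat.cast_zero, zero_mul, sub_zero, range_zero, sum_empty, zero_add,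
        pois, pow_zero, Nat.factorial, Nat.cast_one, Real.exp_neg]
      field_simp
      ring
  | succ i =>
      have e1 : ((i+1) - 1 : ℕ) = i := rfl
      have e2 : ((i+1+1) - 1 : ℕ) = i+1 := rfl
      rw [e1, e2]
      set c := steinC lam h with hc
      set S := ∑ k ∈ range (i+1), pois lam k * (h k - c) with hS
      have hp : pois lam (i+1) = lam^(i+1) / (i+1).factorial * Real.exp (-lam) := rfl
      rw [hp, Real.exp_neg]
      have hf : ((i+1).factorial : ℝ) = (i.factorial : ℝ) * (i+1) := by
        rw [Nat.factorial_succ]; push_cast; ring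
      have hfac : ((i.factorial : ℝ)) ≠ 0 := Nat.cast_ne_zero.mpr (Nat.factorial_ne_zero i)
      have hi1 : ((i:ℝ) + 1) ≠ 0 := by positivity
      rw [hf]
      push_cast
      field_simp
      ring

noncomputable def af (lam : ℝ) (i : ℕ) : ℝ :=
  (∑ u ∈ range (i+1), (i.factorial : ℝ) * lam ^ u / u.factorial) / lam ^ (i+1)
noncomputable def bf (lam : ℝ) (i : ℕ) : ℝ :=
  ∑' s : ℕ, (i.factorial : ℝ) * lam ^ s / (i+1+s).factorial

lemma summable_bf (lam : ℝ) (hl : 0 < lam) (i : ℕ) :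
    Summable (fun s : ℕ => (i.factorial : ℝ) * lam ^ s / (i+1+s).factorial) := by
  apply Summable.of_nonneg_of_le (fun s => by positivity) (fun s => ?_)
    ((Real.summable_pow_div_factorial lam).mul_left (i.factorial : ℝ))
  rw [mul_div_assoc]
  gcongr
  omega

lemma af_eq (lam : ℝ) (hl : 0 < lam) (i : ℕ) :
    af lam i = (i.factorial : ℝ) / lam ^ (i+1) * Real.exp lam * ∑ k ∈ range (i+1), pois lam k := by
  unfold af pois
  rw [mul_sum]
  rw [sum_div]
  apply sum_congr rfl
  intro k _
  rw [Real.exp_neg]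
  have := Real.exp_ne_zero lam
  have : ((k.factorial : ℝ)) ≠ 0 := Nat.cast_ne_zero.mpr (Nat.factorial_ne_zero k)
  field_simp

lemma bf_eq (lam : ℝ) (hl : 0 < lam) (i : ℕ) :
    bf lam i = (i.factorial : ℝ) / lam ^ (i+1) * Real.exp lam *
      (1 - ∑ k ∈ range (i+1), pois lam k) := by
  rw [← tail_pois lam (i+1), ← tsum_mul_left]
  unfold bf pois
  apply tsum_congr
  intro s
  rw [Real.exp_neg, pow_add]
  have h1 := Real.exp_ne_zero lam
  have h2 : (((i+1+s).factorial : ℝ)) ≠ 0 := Nat.cast_ne_zero.mpr (Nat.factorial_ne_zero _)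
  have h3 : lam ≠ 0 := ne_of_gt hl
  field_simp
  ring


noncomputable def T (lam : ℝ) (i k : ℕ) : ℝ := if k ≤ i then bf lam i else -af lam i

lemma g_repr {lam : ℝ} (hl : 0 < lam) (h : ℕ → ℝ)
    (hsum : Summable fun k => pois lam k * h k) (i : ℕ) :
    g lam h (i+1) = ∑' k, pois lam k * h k * T lam i k := by
  have key : ∀ k, pois lam k * h k * T lam i k
      = (if k ≤ i then pois lam k * h k * (bf lam i + af lam i) else 0)
        - pois lam k * h k * af lam i := by
    intro k; unfold T; split <;> ring
  have s1 : Summable (fun k => if k ≤ i then pois lam k * h k * (bf lam i + af lam i) else 0) :=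
    summable_of_ne_finset_zero (s := range (i+1))
      (fun k hk => by rw [if_neg]; simp at hk; omega)
  have s2 : Summable (fun k => pois lam k * h k * af lam i) := hsum.mul_right _
  rw [tsum_congr key, Summable.tsum_sub s1 s2,
    tsum_eq_sum (s := range (i+1)) (fun k hk => by rw [if_neg]; simp at hk; omega),
    tsum_mul_right]
  have e1 : ∑ k ∈ range (i+1), (if k ≤ i then pois lam k * h k * (bf lam i + af lam i) else 0)
      = (∑ k ∈ range (i+1), pois lam k * h k) * (bf lam i + af lam i) := by
    rw [sum_mul]
    apply sum_congr rfl
    intro k hk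
    rw [if_pos (by simp at hk; omega)]
  rw [e1]
  unfold g steinC
  have e2 : ∑ k ∈ range (i+1), pois lam k * (h k - ∑' k, pois lam k * h k)
      = (∑ k ∈ range (i+1), pois lam k * h k)
        - (∑ k ∈ range (i+1), pois lam k) * (∑' k, pois lam k * h k) := by
    rw [sum_mul, ← sum_sub_distrib]
    apply sum_congr rfl
    intro k _; ring
  rw [e2]
  have e3 : (i+1-1 : ℕ) = i := rfl
  rw [e3]
  have hA := af_eq lam hl i
  have hB := bf_eq lam hl i
  set C := (i.factorial : ℝ) / lam ^ (i+1) * Real.exp lam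
  set F := ∑ k ∈ range (i+1), pois lam k
  rw [hB, hA]
  ring

lemma tsum_pois_T {lam : ℝ} (hl : 0 < lam) (i : ℕ) :
    ∑' k, pois lam k * T lam i k = 0 := by
  have hrep := g_repr hl (fun _ => 1) (by simpa using summable_pois lam) i
  simp only [mul_one] at hrep
  rw [← hrep]
  unfold g steinC
  simp [tsum_pois lam]

lemma af_nonneg {lam : ℝ} (hl : 0 < lam) (i : ℕ) : 0 ≤ af lam i := by
  unfold af
  have : (0:ℝ) ≤ ∑ u ∈ range (i+1), (i.factorial : ℝ) * lam ^ u / u.factorial :=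
    sum_nonneg fun u _ => by positivity
  exact div_nonneg this (by positivity)

lemma bf_nonneg {lam : ℝ} (hl : 0 < lam) (i : ℕ) : 0 ≤ bf lam i :=
  tsum_nonneg fun s => by positivity

lemma af_mono {lam : ℝ} (hl : 0 < lam) (i : ℕ) : af lam i ≤ af lam (i+1) := by
  unfold af
  rw [div_le_div_iff₀ (by positivity) (by positivity)]
  have key : lam * ∑ u ∈ range (i+1), (i.factorial : ℝ) * lam ^ u / u.factorial
      ≤ ∑ u ∈ range (i+1+1), ((i+1).factorial : ℝ) * lam ^ u / u.factorial := by
    rw [mul_sum]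
    conv_rhs => rw [sum_range_succ']
    have term : ∀ u, u ∈ range (i+1) →
        lam * ((i.factorial : ℝ) * lam ^ u / u.factorial)
          ≤ ((i+1).factorial : ℝ) * lam ^ (u+1) / (u+1).factorial := by
      intro u hu
      simp only [mem_range] at hu
      rw [mul_div_assoc', div_le_div_iff₀ (by positivity) (by positivity)]
      have hnat : i.factorial * (u+1).factorial ≤ (i+1).factorial * u.factorial := by
        rw [Nat.factorial_succ (u), Nat.factorial_succ i]
        calc i.factorial * ((u+1) * u.factorial) = (u+1) * (i.factorial * u.factorial) := by ring
        _ ≤ (i+1) * (i.factorial * u.factorial) := by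
            apply Nat.mul_le_mul_right; omega
        _ = (i+1) * i.factorial * u.factorial := by ring
      have hcast : (i.factorial : ℝ) * (u+1).factorial ≤ ((i+1).factorial : ℝ) * u.factorial := by
        exact_mod_cast hnat
      have hlp : (0:ℝ) ≤ lam ^ (u+1) := by positivity
      calc lam * ((i.factorial : ℝ) * lam ^ u) * (u+1).factorial
          = lam ^ (u+1) * ((i.factorial : ℝ) * (u+1).factorial) := by rw [pow_succ]; ring
        _ ≤ lam ^ (u+1) * (((i+1).factorial : ℝ) * u.factorial) := by
            apply mul_le_mul_of_nonneg_left hcast hlp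
        _ = ((i+1).factorial : ℝ) * lam ^ (u+1) * u.factorial := by ring
    calc ∑ u ∈ range (i+1), lam * ((i.factorial : ℝ) * lam ^ u / u.factorial)
        ≤ ∑ u ∈ range (i+1), ((i+1).factorial : ℝ) * lam ^ (u+1) / (u+1).factorial :=
          sum_le_sum term
      _ ≤ _ := by
          have : (0:ℝ) ≤ ((i+1).factorial : ℝ) * lam ^ 0 / (Nat.factorial 0) := by positivity
          linarith
  calc (∑ u ∈ range (i+1), (i.factorial : ℝ) * lam ^ u / u.factorial) * lam ^ (i+1+1)
      = (lam * ∑ u ∈ range (i+1), (i.factorial : ℝ) * lam ^ u / u.factorial) * lam ^ (i+1) := by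
        rw [pow_succ]; ring
    _ ≤ (∑ u ∈ range (i+1+1), ((i+1).factorial : ℝ) * lam ^ u / u.factorial) * lam ^ (i+1) := by
        apply mul_le_mul_of_nonneg_right key (by positivity)

lemma bf_anti {lam : ℝ} (hl : 0 < lam) (i : ℕ) : bf lam (i+1) ≤ bf lam i := by
  unfold bf
  apply Summable.tsum_le_tsum _ (summable_bf lam hl (i+1)) (summable_bf lam hl i)
  intro s
  rw [div_le_div_iff₀ (by positivity) (by positivity)]
  have hnat : (i+1).factorial * (i+1+s).factorial ≤ i.factorial * (i+1+1+s).factorial := by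
    have e1 : (i+1+1+s).factorial = (i+2+s) * (i+1+s).factorial := by
      have : i+1+1+s = (i+1+s) + 1 := by omega
      rw [this, Nat.factorial_succ]
    rw [e1, Nat.factorial_succ]
    calc (i+1) * i.factorial * (i+1+s).factorial
        ≤ (i+2+s) * i.factorial * (i+1+s).factorial := by
          apply Nat.mul_le_mul_right
          apply Nat.mul_le_mul_right
          omega
      _ = i.factorial * ((i+2+s) * (i+1+s).factorial) := by ring
  have hcast : ((i+1).factorial : ℝ) * (i+1+s).factorial
      ≤ (i.factorial : ℝ) * (i+1+1+s).factorial := by exact_mod_cast hnat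
  have hlp : (0:ℝ) ≤ lam ^ s := by positivity
  calc ((i+1).factorial : ℝ) * lam ^ s * (i+1+s).factorial
      = lam ^ s * (((i+1).factorial : ℝ) * (i+1+s).factorial) := by ring
    _ ≤ lam ^ s * ((i.factorial : ℝ) * (i+1+1+s).factorial) :=
        mul_le_mul_of_nonneg_left hcast hlp
    _ = (i.factorial : ℝ) * lam ^ s * (i+1+1+s).factorial := by ring



lemma abs_T_le {lam : ℝ} (hl : 0 < lam) (j k : ℕ) : |T lam j k| ≤ af lam j + bf lam j := by
  unfold T; split
  · rw [abs_of_nonneg (bf_nonneg hl j)]; linarith [af_nonneg hl j]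
  · rw [abs_neg, abs_of_nonneg (af_nonneg hl j)]; linarith [bf_nonneg hl j]

lemma summable_poisT {lam : ℝ} (hl : 0 < lam) (h : ℕ → ℝ) (hh0 : ∀ k, 0 ≤ h k)
    (hh1 : ∀ k, h k ≤ 1) (j : ℕ) :
    Summable (fun k => pois lam k * h k * T lam j k) := by
  apply Summable.of_norm_bounded (g := fun k => pois lam k * (af lam j + bf lam j))
    ((summable_pois lam).mul_right _)
  intro k
  have hp := pois_nonneg hl.le k
  rw [Real.norm_eq_abs, abs_mul, abs_of_nonneg (mul_nonneg hp (hh0 k))]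
  have h1 : pois lam k * h k ≤ pois lam k := by nlinarith [hh0 k, hh1 k]
  have h2 := abs_T_le hl j k
  have h3 : (0:ℝ) ≤ |T lam j k| := abs_nonneg _
  nlinarith [mul_nonneg hp (hh0 k)]

lemma summable_poisT' {lam : ℝ} (hl : 0 < lam) (j : ℕ) :
    Summable (fun k => pois lam k * T lam j k) := by
  have := summable_poisT hl (fun _ => 1) (fun _ => zero_le_one) (fun _ => le_refl 1) j
  simpa using this

lemma delta_bound {lam : ℝ} (hl : 0 < lam) (h : ℕ → ℝ) (hh0 : ∀ k, 0 ≤ h k)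
    (hh1 : ∀ k, h k ≤ 1) (i : ℕ) :
    |g lam h (i+2) - g lam h (i+1)| ≤ pois lam (i+1) * (af lam i + bf lam (i+1)) := by
  have hsum : Summable (fun k => pois lam k * h k) :=
    Summable.of_nonneg_of_le (fun k => mul_nonneg (pois_nonneg hl.le k) (hh0 k))
      (fun k => by nlinarith [pois_nonneg hl.le k, hh0 k, hh1 k]) (summable_pois lam)
  set Mi := pois lam (i+1) * (af lam i + bf lam (i+1)) with hMidef
  have hMi0 : 0 ≤ Mi :=
    mul_nonneg (pois_nonneg hl.le _) (add_nonneg (af_nonneg hl i) (bf_nonneg hl (i+1)))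
  have S1 := summable_poisT hl h hh0 hh1 i
  have S2 := summable_poisT hl h hh0 hh1 (i+1)
  have keyD : g lam h (i+2) - g lam h (i+1)
      = ∑' k, (pois lam k * h k * T lam (i+1) k - pois lam k * h k * T lam i k) := by
    rw [g_repr hl h hsum (i+1), g_repr hl h hsum i, Summable.tsum_sub S2 S1]
  have upper : (∑' k, (pois lam k * h k * T lam (i+1) k - pois lam k * h k * T lam i k)) ≤ Mi := by
    have pt : ∀ k, pois lam k * h k * T lam (i+1) k - pois lam k * h k * T lam i k
        ≤ (if k = i+1 then Mi else 0) := by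
      intro k
      have hp := pois_nonneg hl.le k
      have hph : 0 ≤ pois lam k * h k := mul_nonneg hp (hh0 k)
      unfold T
      rcases Nat.lt_trichotomy k (i+1) with hk | hk | hk
      · have h1 : k ≤ i := by omega
        rw [if_pos (by omega : k ≤ i + 1), if_pos h1, if_neg (by omega : ¬ k = i+1)]
        have := bf_anti hl i
        nlinarith
      · subst hk
        rw [if_pos (by omega : i+1 ≤ i+1), if_neg (by omega : ¬ i+1 ≤ i), if_pos rfl]
        nlinarith [af_nonneg hl i, bf_nonneg hl (i+1), pois_nonneg hl.le (i+1),
          hh0 (i+1), hh1 (i+1), mul_nonneg (pois_nonneg hl.le (i+1))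
            (add_nonneg (af_nonneg hl i) (bf_nonneg hl (i+1)))]
      · rw [if_neg (by omega : ¬ k ≤ i + 1), if_neg (by omega : ¬ k ≤ i),
          if_neg (by omega : ¬ k = i+1)]
        have := af_mono hl i
        nlinarith
    calc (∑' k, (pois lam k * h k * T lam (i+1) k - pois lam k * h k * T lam i k))
        ≤ ∑' k, (if k = i+1 then Mi else 0) :=
          Summable.tsum_le_tsum pt (S2.sub S1) ((hasSum_ite_eq (i+1) Mi).summable)
      _ = Mi := tsum_ite_eq (i+1) (fun _ => Mi)
  have lower : -Mi ≤ ∑' k, (pois lam k * h k * T lam (i+1) k - pois lam k * h k * T lam i k) := by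
    have hT1 := summable_poisT' hl (i+1)
    have hT0 := summable_poisT' hl i
    have hIte : Summable (fun k : ℕ => if k = i+1 then -Mi else 0) :=
      (hasSum_ite_eq (i+1) (-Mi)).summable
    have pt : ∀ k, (pois lam k * T lam (i+1) k - pois lam k * T lam i k)
          + (if k = i+1 then -Mi else 0)
        ≤ pois lam k * h k * T lam (i+1) k - pois lam k * h k * T lam i k := by
      intro k
      have hp := pois_nonneg hl.le k
      unfold T
      rcases Nat.lt_trichotomy k (i+1) with hk | hk | hk
      · have h1 : k ≤ i := by omega
        rw [if_pos (by omega : k ≤ i + 1), if_pos h1, if_neg (by omega : ¬ k = i+1)]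
        have hd := bf_anti hl i
        nlinarith [hh0 k, hh1 k,
          mul_nonneg (mul_nonneg hp (sub_nonneg.mpr (hh1 k))) (sub_nonneg.mpr hd)]
      · subst hk
        rw [if_pos (by omega : i+1 ≤ i+1), if_neg (by omega : ¬ i+1 ≤ i), if_pos rfl]
        nlinarith [af_nonneg hl i, bf_nonneg hl (i+1), pois_nonneg hl.le (i+1),
          hh0 (i+1), hh1 (i+1), mul_nonneg (mul_nonneg (pois_nonneg hl.le (i+1)) (hh0 (i+1)))
            (add_nonneg (af_nonneg hl i) (bf_nonneg hl (i+1)))]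
      · rw [if_neg (by omega : ¬ k ≤ i + 1), if_neg (by omega : ¬ k ≤ i),
          if_neg (by omega : ¬ k = i+1)]
        have hd := af_mono hl i
        nlinarith [hh0 k, hh1 k,
          mul_nonneg (mul_nonneg hp (sub_nonneg.mpr (hh1 k))) (sub_nonneg.mpr hd)]
    have hle := Summable.tsum_le_tsum pt ((hT1.sub hT0).add hIte) (S2.sub S1)
    rw [Summable.tsum_add (hT1.sub hT0) hIte, Summable.tsum_sub hT1 hT0, tsum_pois_T hl (i+1), tsum_pois_T hl i,
      tsum_ite_eq] at hle
    linarith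
  rw [keyD]
  exact abs_le.mpr ⟨lower, upper⟩



lemma tail_exp (lam : ℝ) (j : ℕ) :
    ∑' s : ℕ, lam ^ (j + s) / (j + s).factorial
      = Real.exp lam - ∑ u ∈ range j, lam ^ u / u.factorial := by
  have h := Summable.sum_add_tsum_nat_add (f := fun m : ℕ => lam ^ m / m.factorial) j
    (Real.summable_pow_div_factorial lam)
  rw [exp_eq_tsum]
  have h2 : ∀ s : ℕ, lam ^ (j + s) / (j + s).factorial = lam ^ (s + j) / (s + j).factorial := by
    intro s; rw [add_comm]
  rw [tsum_congr h2]
  linarith [h]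

lemma M_le {lam : ℝ} (hl : 0 < lam) (i : ℕ) :
    pois lam (i+1) * (af lam i + bf lam (i+1)) ≤ (1 - Real.exp (-lam)) / lam := by
  have hlne : lam ≠ 0 := ne_of_gt hl
  have hi1 : ((i:ℝ) + 1) ≠ 0 := by positivity
  set E1 := ∑ u ∈ range (i+1), lam ^ u / (u.factorial : ℝ) with hE1
  set E2 := ∑ u ∈ range (i+2), lam ^ u / (u.factorial : ℝ) with hE2
  have h1 : pois lam (i+1) * af lam i = Real.exp (-lam) / ((i:ℝ)+1) * E1 := by
    have hS : (∑ u ∈ range (i+1), (i.factorial:ℝ) * lam ^ u / u.factorial)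
        = (i.factorial:ℝ) * E1 := by
      rw [hE1, mul_sum]
      exact sum_congr rfl fun u _ => by ring
    unfold pois af
    rw [hS, Nat.factorial_succ]
    have hfac : ((i.factorial : ℝ)) ≠ 0 := Nat.cast_ne_zero.mpr (Nat.factorial_ne_zero i)
    push_cast
    field_simp
  have h2 : pois lam (i+1) * bf lam (i+1) = Real.exp (-lam) / lam * (Real.exp lam - E2) := by
    have key : ∀ s : ℕ, pois lam (i+1) * ((( i+1).factorial:ℝ) * lam ^ s / ((i+1)+1+s).factorial)
        = Real.exp (-lam) / lam * (lam ^ ((i+2) + s) / ((i+2) + s).factorial) := by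
      intro s
      unfold pois
      have hfac : (((i+1).factorial : ℝ)) ≠ 0 := Nat.cast_ne_zero.mpr (Nat.factorial_ne_zero _)
      have hfac2 : ((((i+2)+s).factorial : ℝ)) ≠ 0 := Nat.cast_ne_zero.mpr (Nat.factorial_ne_zero _)
      have he : i+1+1+s = i+2+s := by omega
      rw [he]
      rw [pow_add]
      field_simp
      ring
    unfold bf
    rw [← tsum_mul_left, tsum_congr key, tsum_mul_left, tail_exp lam (i+2)]
  have key : lam / ((i:ℝ)+1) * E1 ≤ E2 - 1 := by
    have hE2' : E2 - 1 = ∑ u ∈ range (i+1), lam ^ (u+1) / ((u+1).factorial : ℝ) := by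
      rw [hE2, sum_range_succ']
      simp
    have hL : lam / ((i:ℝ)+1) * E1 = ∑ u ∈ range (i+1), lam ^ (u+1) / (((i:ℝ)+1) * u.factorial) := by
      rw [hE1, mul_sum]
      apply sum_congr rfl
      intro u _
      rw [pow_succ]
      field_simp
    rw [hE2', hL]
    apply sum_le_sum
    intro u hu
    simp only [mem_range] at hu
    apply div_le_div_of_nonneg_left (by positivity) (by positivity)
    have : ((u+1).factorial : ℝ) = ((u:ℝ)+1) * u.factorial := by
      rw [Nat.factorial_succ]; push_cast; ring
    rw [this]
    have hf0 : (0:ℝ) < (u.factorial : ℝ) := by exact_mod_cast Nat.factorial_pos u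
    have : ((u:ℝ)+1) ≤ ((i:ℝ)+1) := by
      have : (u:ℝ) ≤ i := by exact_mod_cast Nat.lt_succ_iff.mp hu
      linarith
    nlinarith
  rw [mul_add, h1, h2]
  have hq : (0:ℝ) ≤ Real.exp (-lam) / lam := le_of_lt (div_pos (Real.exp_pos _) hl)
  have hstep := mul_le_mul_of_nonneg_left key hq
  have hh : Real.exp (-lam) / lam * (lam / ((i:ℝ)+1) * E1) = Real.exp (-lam) / ((i:ℝ)+1) * E1 := by
    field_simp
  have hx : Real.exp (-lam) * Real.exp lam = 1 := by
    rw [← Real.exp_add]; simp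
  have hfin : Real.exp (-lam) / lam * (E2 - 1) + Real.exp (-lam) / lam * (Real.exp lam - E2)
      = (1 - Real.exp (-lam)) / lam := by
    field_simp
    nlinarith [hx]
  linarith [hstep, hh.symm.le, hh.le]



noncomputable def bin (p : ℝ) (n m : ℕ) : ℝ := (n.choose m : ℝ) * p ^ m * (1 - p) ^ (n - m)

lemma bin_nonneg {p : ℝ} (hp0 : 0 ≤ p) (hp1 : p ≤ 1) (n m : ℕ) : 0 ≤ bin p n m := by
  unfold bin
  have : (0:ℝ) ≤ 1 - p := by linarith
  positivity

lemma bin_eq_zero {p : ℝ} {n m : ℕ} (hm : n < m) : bin p n m = 0 := by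
  unfold bin
  rw [Nat.choose_eq_zero_of_lt hm]
  simp

lemma sum_bin (p : ℝ) (n : ℕ) : ∑ m ∈ range (n+1), bin p n m = 1 := by
  have h1 : (1:ℝ) = (p + (1-p)) ^ n := by norm_num
  rw [add_pow] at h1
  rw [h1]
  apply sum_congr rfl
  intro m _
  unfold bin
  ring

lemma summable_bin (p : ℝ) (n : ℕ) : Summable (fun m => bin p n m) :=
  summable_of_ne_finset_zero (s := range (n+1))
    (fun m hm => bin_eq_zero (by simp at hm; omega))

lemma tsum_bin (p : ℝ) (n : ℕ) : ∑' m, bin p n m = 1 := by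
  rw [tsum_eq_sum (s := range (n+1)) (fun m hm => bin_eq_zero (by simp at hm; omega))]
  exact sum_bin p n

lemma bin_pascal (p : ℝ) (N k : ℕ) :
    bin p (N+1) (k+1) = p * bin p N k + (1-p) * bin p N (k+1) := by
  unfold bin
  rcases Nat.lt_or_ge k N with hk | hk
  · have h1 : N + 1 - (k+1) = (N - (k+1)) + 1 := by omega
    have h2 : N - k = (N - (k+1)) + 1 := by omega
    rw [Nat.choose_succ_succ, h1, h2]
    push_cast
    ring
  · have h0 : N.choose (k+1) = 0 := Nat.choose_eq_zero_of_lt (by omega)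
    have h1 : N + 1 - (k+1) = N - k := Nat.succ_sub_succ _ _
    rw [Nat.choose_succ_succ, h0, h1]
    push_cast
    ring

lemma ti (p : ℝ) (N : ℕ) (G : ℕ → ℝ) :
    ∑ m ∈ range (N+2), (m:ℝ) * bin p (N+1) m * G m
      = ((N:ℝ)+1) * p * ∑ m ∈ range (N+1), bin p N m * G (m+1) := by
  rw [sum_range_succ']
  simp only [Nat.cast_zero, zero_mul, add_zero]
  rw [mul_sum]
  apply sum_congr rfl
  intro k _
  have hcast : ((N:ℝ)+1) * (N.choose k : ℝ) = ((N+1).choose (k+1) : ℝ) * ((k:ℝ)+1) := by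
    exact_mod_cast Nat.add_one_mul_choose_eq N k
  have hsub : N + 1 - (k+1) = N - k := Nat.succ_sub_succ _ _
  unfold bin
  rw [hsub]
  push_cast
  linear_combination (-(G (k+1)) * p^(k+1) * (1-p)^(N-k)) * hcast

lemma tii (p : ℝ) (N : ℕ) (G : ℕ → ℝ) :
    ∑ m ∈ range (N+2), bin p (N+1) m * G (m+1)
      = (1-p) * ∑ m ∈ range (N+1), bin p N m * G (m+1)
        + p * ∑ m ∈ range (N+1), bin p N m * G (m+2) := by
  rw [sum_range_succ']
  have e1 : ∀ k ∈ range (N+1), bin p (N+1) (k+1) * G (k+1+1)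
      = p * (bin p N k * G (k+2)) + (1-p) * (bin p N (k+1) * G (k+2)) := by
    intro k _
    rw [bin_pascal]
    ring
  rw [sum_congr rfl e1, sum_add_distrib, ← mul_sum, ← mul_sum]
  have e2 : ∑ k ∈ range (N+1), bin p N (k+1) * G (k+2)
      = ∑ k ∈ range N, bin p N (k+1) * G (k+2) := by
    rw [sum_range_succ, bin_eq_zero (by omega : N < N+1)]
    simp
  have e3 : bin p (N+1) 0 = (1-p) * bin p N 0 := by
    unfold bin
    simp [pow_succ]
    ring
  have e4 : ∑ m ∈ range (N+1), bin p N m * G (m+1)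
      = ∑ k ∈ range N, bin p N (k+1) * G (k+1+1) + bin p N 0 * G (0+1) :=
    sum_range_succ' _ _
  rw [e2, e3, e4]
  ring



theorem main_bound {p : ℝ} (hp : 0 < p) (hp1 : p ≤ 1) (N : ℕ) :
    ∑' m : ℕ, |pois (((N+1 : ℕ) : ℝ) * p) m - bin p (N+1) m| ≤ 2 * p := by
  push_cast
  set lam := ((N:ℝ)+1) * p with hlamdef
  have hl : 0 < lam := by positivity
  set h : ℕ → ℝ := fun m => if bin p (N+1) m < pois lam m then 1 else 0 with hdef
  have hh0 : ∀ k, 0 ≤ h k := fun k => by rw [hdef]; dsimp only; split <;> norm_num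
  have hh1 : ∀ k, h k ≤ 1 := fun k => by rw [hdef]; dsimp only; split <;> norm_num
  have hsumPH : Summable (fun k => pois lam k * h k) :=
    Summable.of_nonneg_of_le (fun k => mul_nonneg (pois_nonneg hl.le k) (hh0 k))
      (fun k => by nlinarith [pois_nonneg hl.le k, hh0 k, hh1 k]) (summable_pois lam)
  set c := steinC lam h with hcdef
  have A1 : ∑ m ∈ range (N+2), bin p (N+1) m * (h m - c)
      = lam * (∑ m ∈ range (N+2), bin p (N+1) m * g lam h (m+1))
        - ∑ m ∈ range (N+2), (m:ℝ) * bin p (N+1) m * g lam h m := by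
    rw [mul_sum, ← sum_sub_distrib]
    apply sum_congr rfl
    intro m _
    have hst := stein_eq lam hl h m
    rw [hcdef, ← hst]
    ring
  have A2 := ti p N (g lam h)
  have A3 := tii p N (g lam h)
  have A4 : ∑ m ∈ range (N+2), bin p (N+1) m * (h m - c)
      = ((N:ℝ)+1) * p * p
        * ∑ m ∈ range (N+1), bin p N m * (g lam h (m+2) - g lam h (m+1)) := by
    rw [A1, A2, A3]
    have e : ∑ m ∈ range (N+1), bin p N m * (g lam h (m+2) - g lam h (m+1))
        = (∑ m ∈ range (N+1), bin p N m * g lam h (m+2))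
          - ∑ m ∈ range (N+1), bin p N m * g lam h (m+1) := by
      rw [← sum_sub_distrib]
      exact sum_congr rfl fun m _ => by ring
    rw [e, hlamdef]
    ring
  have A5 : |∑ m ∈ range (N+2), bin p (N+1) m * (h m - c)| ≤ p := by
    rw [A4]
    have habs : |∑ m ∈ range (N+1), bin p N m * (g lam h (m+2) - g lam h (m+1))|
        ≤ (1 - Real.exp (-lam)) / lam := by
      calc |∑ m ∈ range (N+1), bin p N m * (g lam h (m+2) - g lam h (m+1))|
          ≤ ∑ m ∈ range (N+1), |bin p N m * (g lam h (m+2) - g lam h (m+1))| :=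
            abs_sum_le_sum_abs _ _
        _ ≤ ∑ m ∈ range (N+1), bin p N m * ((1 - Real.exp (-lam)) / lam) := by
            apply sum_le_sum
            intro m _
            rw [abs_mul, abs_of_nonneg (bin_nonneg hp.le hp1 N m)]
            exact mul_le_mul_of_nonneg_left
              (le_trans (delta_bound hl h hh0 hh1 m) (M_le hl m))
              (bin_nonneg hp.le hp1 N m)
        _ = (1 - Real.exp (-lam)) / lam := by rw [← sum_mul, sum_bin, one_mul]
    rw [abs_mul, abs_of_nonneg (by positivity : (0:ℝ) ≤ ((N:ℝ)+1) * p * p)]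
    have step := mul_le_mul_of_nonneg_left habs
      (by positivity : (0:ℝ) ≤ ((N:ℝ)+1) * p * p)
    have e2 : ((N:ℝ)+1) * p * p * ((1 - Real.exp (-lam)) / lam) = p * (1 - Real.exp (-lam)) := by
      rw [hlamdef]
      have : ((N:ℝ)+1) * p ≠ 0 := by positivity
      field_simp
    have e3 : p * (1 - Real.exp (-lam)) ≤ p := by nlinarith [Real.exp_pos (-lam)]
    linarith
  have B1 : ∑ m ∈ range (N+2), bin p (N+1) m * (h m - c)
      = (∑ m ∈ range (N+2), bin p (N+1) m * h m) - c := by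
    have e1 : ∑ m ∈ range (N+2), bin p (N+1) m * (h m - c)
        = (∑ m ∈ range (N+2), bin p (N+1) m * h m)
          - (∑ m ∈ range (N+2), bin p (N+1) m) * c := by
      rw [sum_mul, ← sum_sub_distrib]
      exact sum_congr rfl fun m _ => by ring
    have e2 : ∑ m ∈ range (N+2), bin p (N+1) m = 1 := sum_bin p (N+1)
    rw [e1, e2, one_mul]
  have key : |(∑ m ∈ range (N+2), bin p (N+1) m * h m) - c| ≤ p := by rw [← B1]; exact A5
  have hbig : ∀ m, N + 1 < m → bin p (N+1) m * h m = 0 := by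
    intro m hm
    rw [bin_eq_zero hm]
    ring
  have hsumB : Summable (fun m => bin p (N+1) m) := summable_bin p (N+1)
  have hsumBH : Summable (fun m => bin p (N+1) m * h m) :=
    summable_of_ne_finset_zero (s := range (N+2))
      (fun m hm => hbig m (by simp at hm; omega))
  have htB : ∑' m, bin p (N+1) m * h m = ∑ m ∈ range (N+2), bin p (N+1) m * h m :=
    tsum_eq_sum (fun m hm => hbig m (by simp at hm; omega))
  have habs_eq : ∀ m, |pois lam m - bin p (N+1) m|
      = 2 * (pois lam m * h m - bin p (N+1) m * h m) - (pois lam m - bin p (N+1) m) := by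
    intro m
    rw [hdef]
    dsimp only
    split
    · rename_i hlt
      rw [abs_of_pos (by linarith)]
      ring
    · rename_i hge
      push_neg at hge
      rw [abs_of_nonpos (by linarith)]
      ring
  have hc2 : (∑' k, pois lam k * h k) = c := rfl
  calc ∑' m, |pois lam m - bin p (N+1) m|
      = ∑' m, (2 * (pois lam m * h m - bin p (N+1) m * h m)
          - (pois lam m - bin p (N+1) m)) := tsum_congr habs_eq
    _ = 2 * ((∑' m, pois lam m * h m) - ∑' m, bin p (N+1) m * h m)
        - ((∑' m, pois lam m) - ∑' m, bin p (N+1) m) := by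
        rw [Summable.tsum_sub ((hsumPH.sub hsumBH).mul_left 2) ((summable_pois lam).sub hsumB),
          tsum_mul_left, Summable.tsum_sub hsumPH hsumBH, Summable.tsum_sub (summable_pois lam) hsumB]
    _ = 2 * (c - ∑ m ∈ range (N+2), bin p (N+1) m * h m) := by
        rw [tsum_pois lam, tsum_bin p (N+1), htB, hc2]
        ring
    _ ≤ 2 * p := by
        have hk := abs_le.mp key
        have := hk.1
        linarith

end Vervaat

/-- Vervaat's inequality: the total variation-type distance between the Poisson
distribution with mean `n*p` and the binomial distribution with parameters `n, p`
is at most `2*p`. Here `Nat.choose n m = 0` for `m > n`. -/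
theorem poisson_binomial_tv_le (n : ℕ) (p : ℝ) (hp : 0 < p) (hp1 : p ≤ 1) :
    ∑' m : ℕ, |((n : ℝ) * p) ^ m / (Nat.factorial m) * Real.exp (-((n : ℝ) * p)) -
      (n.choose m : ℝ) * p ^ m * (1 - p) ^ (n - m)| ≤ 2 * p := by
  cases n with
  | zero =>
      have hz : ∀ m : ℕ, |((0 : ℝ) * p) ^ m / (Nat.factorial m) * Real.exp (-((0 : ℝ) * p)) -
          ((Nat.choose 0 m : ℝ)) * p ^ m * (1 - p) ^ (0 - m)| = 0 := by
        intro m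
        cases m with
        | zero => simp
        | succ k => simp [zero_pow, Nat.choose]
      have : ∑' m : ℕ, |((0 : ℝ) * p) ^ m / (Nat.factorial m) * Real.exp (-((0 : ℝ) * p)) -
          ((Nat.choose 0 m : ℝ)) * p ^ m * (1 - p) ^ (0 - m)| = 0 := by
        rw [tsum_congr hz]
        exact tsum_zero
      simp only [Nat.cast_zero] at this ⊢
      rw [this]
      positivity
  | succ N =>
      have H := Vervaat.main_bound hp hp1 N
      unfold Vervaat.pois Vervaat.bin at H
      exact H
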